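/- Let K₁ ⊆ ℝ^N be nonempty and compact and K₂ ⊆ ℝ^N nonempty, compact and convex. Let T : K₂ × K₁ → 2^{K₂} be a set-valued mapping such that T(·, x) is rotund for every x ∈ K₁ and T is continuous on K₂ × K₁ with nonempty closed values, and let f : ℝ^N × ℝ^N → ℝ be continuous on K₁ × K₂. Then there exist a continuous map r : K₁ → ℝ^N with r(x) ∈ R'_{SE}(x) for every x ∈ K₁, and a point x* ∈ K₁, such that f(x*, r(x*)) ≤ f(x, r(x)) for all x ∈ K₁; in particular, (x*, y*) with y* = r(x*) ∈ R'_{SE}(x*) is a solution of the generalized Stackelberg equilibrium problem: minimize f(x, y) subject to y ∈ R'_{SE}(x), x ∈ K₁. -/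

import Mathlib

open Filter Topology Set Pointwise

section AuxLemmas

variable {N : ℕ}

local notation "E" => EuclideanSpace ℝ (Fin N)

/-- Fixed point for convex-closed-graph maps via separation. -/
lemma fix_aux (K' : Set E) (hne : K'.Nonempty) (hcomp : IsCompact K')
    (hconv : Convex ℝ K') (G' : Set (E × E)) (hGconv : Convex ℝ G')
    (hGclosed : IsClosed G') (hval : ∀ y ∈ K', ∃ z ∈ K', (y, z) ∈ G') :
    ∃ y ∈ K', (y, y) ∈ G' := by
  by_contra hcon
  push_neg at hcon
  set G'' : Set (E × E) := G' ∩ (K' ×ˢ K') with hG''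
  have hG''comp : IsCompact G'' :=
    (hcomp.prod hcomp).of_isClosed_subset
      (hGclosed.inter (hcomp.isClosed.prod hcomp.isClosed)) inter_subset_right
  have hG''conv : Convex ℝ G'' := hGconv.inter (hconv.prod hconv)
  set D : Set (E × E) := (fun y => (y, y)) '' K' with hD
  have hDconv : Convex ℝ D := by
    have := hconv.linear_image (LinearMap.prod (LinearMap.id) (LinearMap.id))
    exact this
  have hDcomp : IsCompact D := hcomp.image (continuous_id.prodMk continuous_id)
  have hdisj : Disjoint G'' D := by
    rw [Set.disjoint_right]
    rintro p ⟨y, hyK, rfl⟩ ⟨hpG, _⟩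
    exact hcon y hyK hpG
  obtain ⟨φ, u, v, hGu, huv, hDv⟩ :=
    geometric_hahn_banach_compact_closed hG''conv hG''comp hDconv hDcomp.isClosed hdisj
  have hcont : ContinuousOn (fun y : E => φ ((0 : E), y)) K' :=
    (φ.continuous.comp (continuous_const.prodMk continuous_id)).continuousOn
  obtain ⟨y₀, hy₀K, hy₀min⟩ := hcomp.exists_isMinOn hne hcont
  obtain ⟨z₀, hz₀K, hz₀G⟩ := hval y₀ hy₀K
  have h1 : φ (y₀, z₀) < u := hGu _ ⟨hz₀G, ⟨hy₀K, hz₀K⟩⟩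
  have h2 : v < φ (y₀, y₀) := hDv _ ⟨y₀, hy₀K, rfl⟩
  have hsplit : ∀ a b : E, φ (a, b) = φ (a, 0) + φ ((0 : E), b) := by
    intro a b
    rw [← map_add]
    congr 1
    simp [Prod.ext_iff]
  have hmin := isMinOn_iff.mp hy₀min z₀ hz₀K
  have e1 := hsplit y₀ z₀
  have e2 := hsplit y₀ y₀
  linarith

/-- Minimal-norm point of a nonempty compact convex set, with obtuse-angle property. -/
lemma proj_aux (K : Set E) (hne : K.Nonempty) (hcomp : IsCompact K) (hconv : Convex ℝ K) :
    ∃ v ∈ K, (∀ w ∈ K, ‖v‖ ≤ ‖w‖) ∧ ∀ w ∈ K, (inner ℝ ((0 : E) - v) (w - v) : ℝ) ≤ 0 := by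
  obtain ⟨v, hvK, hv⟩ :=
    exists_norm_eq_iInf_of_complete_convex hne (hcomp.isClosed.isComplete) hconv (0 : E)
  refine ⟨v, hvK, ?_, ?_⟩
  · intro w hw
    have h1 : ‖(0 : E) - v‖ ≤ ‖(0 : E) - w‖ := by
      rw [hv]
      exact ciInf_le ⟨0, Set.forall_mem_range.2 fun _ => norm_nonneg _⟩ (⟨w, hw⟩ : K)
    simpa using h1
  · exact (norm_eq_iInf_iff_real_inner_le_zero hconv hvK).mp hv

/-- Points of a closed set `B` that are close to a compact set `A` are close to `A ∩ B`. -/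
lemma near_aux (A B : Set (E × E)) (hA : IsCompact A) (hB : IsClosed B)
    (hAB : (A ∩ B).Nonempty) (ε : ℝ) (hε : 0 < ε) :
    ∃ δ > 0, ∀ q ∈ B, Metric.infDist q A < δ → ∃ a ∈ A ∩ B, dist q a < ε := by
  obtain ⟨a₀, ha₀⟩ := id hAB
  obtain ⟨RA, hRA⟩ := hA.isBounded.subset_closedBall a₀
  have hAne : A.Nonempty := ⟨a₀, ha₀.1⟩
  set C : Set (E × E) := B ∩ {q | Metric.infDist q A ≤ 1} ∩
      {q | ε / 2 ≤ Metric.infDist q (A ∩ B)} with hC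
  have hCclosed : IsClosed C :=
    ((hB.inter (isClosed_le (Metric.continuous_infDist_pt A) continuous_const)).inter
      (isClosed_le continuous_const (Metric.continuous_infDist_pt (A ∩ B))))
  have hCsub : C ⊆ Metric.closedBall a₀ (RA + 1) := by
    rintro q ⟨⟨_, hq1⟩, _⟩
    obtain ⟨a, haA, hdist⟩ := hA.exists_infDist_eq_dist hAne q
    have h2 : dist q a ≤ 1 := by rw [← hdist]; exact hq1
    have h3 : dist a a₀ ≤ RA := hRA haA
    have := dist_triangle q a a₀
    simp only [Metric.mem_closedBall]
    linarith
  have hCcomp : IsCompact C :=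
    (isCompact_closedBall a₀ (RA + 1)).of_isClosed_subset hCclosed hCsub
  rcases C.eq_empty_or_nonempty with hCe | hCne
  · refine ⟨1, one_pos, fun q hqB hq => ?_⟩
    have hq1 : Metric.infDist q A ≤ 1 := hq.le
    have : q ∉ C := hCe ▸ Set.notMem_empty q
    have h4 : Metric.infDist q (A ∩ B) < ε / 2 := by
      by_contra h5
      exact this ⟨⟨hqB, hq1⟩, le_of_not_gt h5⟩
    obtain ⟨a, haAB, hda⟩ := ((hA.inter_right hB).exists_infDist_eq_dist hAB q)
    exact ⟨a, haAB, by rw [← hda]; linarith⟩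
  · obtain ⟨qbar, hqbarC, hqbarmin⟩ :=
      hCcomp.exists_isMinOn hCne (Metric.continuous_infDist_pt A).continuousOn
    have hm : 0 < Metric.infDist qbar A := by
      rcases lt_or_ge 0 (Metric.infDist qbar A) with h | h
      · exact h
      · exfalso
        have h0 : Metric.infDist qbar A = 0 :=
          le_antisymm h (Metric.infDist_nonneg)
        have hq : qbar ∈ A := by
          have := (Metric.mem_closure_iff_infDist_zero hAne).mpr h0
          rwa [hA.isClosed.closure_eq] at this
        have hmem : qbar ∈ A ∩ B := ⟨hq, hqbarC.1.1⟩
        have : Metric.infDist qbar (A ∩ B) = 0 := Metric.infDist_zero_of_mem hmem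
        have h6 := hqbarC.2
        simp only [Set.mem_setOf_eq, this] at h6
        linarith
    refine ⟨min (Metric.infDist qbar A) 1, lt_min hm one_pos, fun q hqB hq => ?_⟩
    have hq1 : Metric.infDist q A ≤ 1 := le_of_lt (lt_of_lt_of_le hq (min_le_right _ _))
    have h4 : Metric.infDist q (A ∩ B) < ε / 2 := by
      by_contra h5
      have hqC : q ∈ C := ⟨⟨hqB, hq1⟩, le_of_not_gt h5⟩
      have := isMinOn_iff.mp hqbarmin q hqC
      have h7 := lt_of_lt_of_le hq (min_le_left _ _)
      linarith
    obtain ⟨a, haAB, hda⟩ := ((hA.inter_right hB).exists_infDist_eq_dist hAB q)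
    exact ⟨a, haAB, by rw [← hda]; linarith⟩

end AuxLemmas
/-- A set-valued mapping `Φ` is lower semicontinuous at `u₀` if for every `x ∈ Φ(u₀)` and
every open neighborhood `V` of `x` there is a neighborhood `U` of `u₀` such that
`Φ(u) ∩ V ≠ ∅` for all `u ∈ U`. -/
def LscAt {Δ Δ₁ : Type*} [TopologicalSpace Δ] [TopologicalSpace Δ₁]
    (Φ : Δ → Set Δ₁) (u₀ : Δ) : Prop :=
  ∀ x ∈ Φ u₀, ∀ V : Set Δ₁, IsOpen V → x ∈ V →
    ∃ U ∈ 𝓝 u₀, ∀ u ∈ U, (Φ u ∩ V).Nonempty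

/-- Lower semicontinuity at `u₀` of a set-valued mapping whose domain is the subset `s`
(neighborhoods are taken relative to `s`). -/
def LscWithinAt {Δ Δ₁ : Type*} [TopologicalSpace Δ] [TopologicalSpace Δ₁]
    (Φ : Δ → Set Δ₁) (s : Set Δ) (u₀ : Δ) : Prop :=
  ∀ x ∈ Φ u₀, ∀ V : Set Δ₁, IsOpen V → x ∈ V →
    ∃ U ∈ 𝓝[s] u₀, ∀ u ∈ U, (Φ u ∩ V).Nonempty

/-- A set-valued mapping `Φ` is upper semicontinuous at `u₀` if for every open `V ⊇ Φ(u₀)`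
there is a neighborhood `U` of `u₀` with `Φ(u) ⊆ V` for all `u ∈ U`. -/
def UscAt {Δ Δ₁ : Type*} [TopologicalSpace Δ] [TopologicalSpace Δ₁]
    (Φ : Δ → Set Δ₁) (u₀ : Δ) : Prop :=
  ∀ V : Set Δ₁, IsOpen V → Φ u₀ ⊆ V → ∃ U ∈ 𝓝 u₀, ∀ u ∈ U, Φ u ⊆ V

/-- Upper semicontinuity at `u₀` of a set-valued mapping whose domain is the subset `s`
(neighborhoods are taken relative to `s`). -/
def UscWithinAt {Δ Δ₁ : Type*} [TopologicalSpace Δ] [TopologicalSpace Δ₁]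
    (Φ : Δ → Set Δ₁) (s : Set Δ) (u₀ : Δ) : Prop :=
  ∀ V : Set Δ₁, IsOpen V → Φ u₀ ⊆ V → ∃ U ∈ 𝓝[s] u₀, ∀ u ∈ U, Φ u ⊆ V

/-- The graph of a set-valued mapping `Φ` with domain `A`. -/
def GraphOn {X Z : Type*} (A : Set X) (Φ : X → Set Z) : Set (X × Z) :=
  {p | p.1 ∈ A ∧ p.2 ∈ Φ p.1}

/-- A set-valued mapping `Φ` with domain `A` is rotund if its graph is convex and, for any
two points of the graph with distinct first components and distinct second components,
the open segment between them meets the complement of the boundary of the graph. -/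
def RotundOn {X Z : Type*} [NormedAddCommGroup X] [NormedSpace ℝ X]
    [NormedAddCommGroup Z] [NormedSpace ℝ Z] (A : Set X) (Φ : X → Set Z) : Prop :=
  Convex ℝ (GraphOn A Φ) ∧
    ∀ p ∈ GraphOn A Φ, ∀ q ∈ GraphOn A Φ, p.1 ≠ q.1 → p.2 ≠ q.2 →
      ∃ l ∈ Set.Ioo (0 : ℝ) 1, l • p + (1 - l) • q ∈ (frontier (GraphOn A Φ))ᶜ

set_option maxHeartbeats 2000000 in
/-- Existence of solutions for the generalized Stackelberg equilibrium problem: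
with `K₁ ⊆ ℝ^N` nonempty compact, `K₂ ⊆ ℝ^N` nonempty compact convex, `T(·, x)` rotund
for every `x ∈ K₁`, `T` continuous on `K₂ × K₁` with nonempty closed values, and
`f` continuous on `K₁ × K₂`, there exist a continuous selection `r` of
`R'_SE(x) = {y ∈ K₂ : y ∈ T(y, x)}` and a point `x⋆ ∈ K₁` minimizing `x ↦ f(x, r(x))`
over `K₁`. -/
theorem stmt_11 {N : ℕ}
    (K₁ K₂ : Set (EuclideanSpace ℝ (Fin N)))
    (hK₁ne : K₁.Nonempty) (hK₁comp : IsCompact K₁)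
    (hK₂ne : K₂.Nonempty) (hK₂comp : IsCompact K₂) (hK₂conv : Convex ℝ K₂)
    (T : EuclideanSpace ℝ (Fin N) → EuclideanSpace ℝ (Fin N) →
      Set (EuclideanSpace ℝ (Fin N)))
    (hTK : ∀ y ∈ K₂, ∀ x ∈ K₁, T y x ⊆ K₂)
    (hrot : ∀ x ∈ K₁, RotundOn K₂ (fun y => T y x))
    (hcont : ∀ y ∈ K₂, ∀ x ∈ K₁,
      UscWithinAt (fun p : EuclideanSpace ℝ (Fin N) × EuclideanSpace ℝ (Fin N) =>
        T p.1 p.2) (K₂ ×ˢ K₁) (y, x) ∧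
      LscWithinAt (fun p : EuclideanSpace ℝ (Fin N) × EuclideanSpace ℝ (Fin N) =>
        T p.1 p.2) (K₂ ×ˢ K₁) (y, x))
    (hval : ∀ y ∈ K₂, ∀ x ∈ K₁, (T y x).Nonempty ∧ IsClosed (T y x))
    (f : EuclideanSpace ℝ (Fin N) → EuclideanSpace ℝ (Fin N) → ℝ)
    (hf : ContinuousOn (fun p : EuclideanSpace ℝ (Fin N) × EuclideanSpace ℝ (Fin N) =>
      f p.1 p.2) (K₁ ×ˢ K₂)) :
    ∃ r : EuclideanSpace ℝ (Fin N) → EuclideanSpace ℝ (Fin N),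
      ContinuousOn r K₁ ∧ (∀ x ∈ K₁, r x ∈ K₂ ∧ r x ∈ T (r x) x) ∧
      ∃ xs ∈ K₁, ∀ x ∈ K₁, f xs (r xs) ≤ f x (r x) := by
  classical
  set G : EuclideanSpace ℝ (Fin N) → Set (EuclideanSpace ℝ (Fin N) × EuclideanSpace ℝ (Fin N)) :=
    fun x => GraphOn K₂ (fun y => T y x) with hGdef
  set R : EuclideanSpace ℝ (Fin N) → Set (EuclideanSpace ℝ (Fin N)) :=
    fun x => {y | y ∈ K₂ ∧ y ∈ T y x} with hRdef
  have hGmem : ∀ x p, p ∈ G x ↔ p.1 ∈ K₂ ∧ p.2 ∈ T p.1 x := by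
    intro x p; rfl
  have hGconv : ∀ x ∈ K₁, Convex ℝ (G x) := fun x hx => (hrot x hx).1
  have hGsub : ∀ x ∈ K₁, G x ⊆ K₂ ×ˢ K₂ := by
    intro x hx p hp
    exact ⟨hp.1, hTK p.1 hp.1 x hx hp.2⟩
  -- closedness of the graphs
  have hGclosed : ∀ x ∈ K₁, IsClosed (G x) := by
    intro x hx
    apply IsSeqClosed.isClosed
    intro pn p hpn hlim
    have hlim1 : Filter.Tendsto (fun n => (pn n).1) atTop (𝓝 p.1) :=
      (continuous_fst.tendsto p).comp hlim
    have hlim2 : Filter.Tendsto (fun n => (pn n).2) atTop (𝓝 p.2) :=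
      (continuous_snd.tendsto p).comp hlim
    have h1 : p.1 ∈ K₂ :=
      hK₂comp.isClosed.mem_of_tendsto hlim1 (Filter.Eventually.of_forall fun n => (hpn n).1)
    refine ⟨h1, ?_⟩
    by_contra hnot
    obtain ⟨hSne, hSclosed⟩ := hval p.1 h1 x hx
    obtain ⟨ε, hε, hsep⟩ : ∃ ε > 0, ∀ z ∈ T p.1 x, ε ≤ dist p.2 z := by
      have hpc : p.2 ∈ (T p.1 x)ᶜ := hnot
      obtain ⟨ε, hε, hball⟩ := Metric.isOpen_iff.mp hSclosed.isOpen_compl p.2 hpc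
      refine ⟨ε, hε, fun z hz => ?_⟩
      by_contra hlt
      push_neg at hlt
      exact hball (by rw [Metric.mem_ball, dist_comm]; exact hlt) hz
    set V := Metric.thickening (ε / 2) (T p.1 x) with hV
    obtain ⟨U, hU, hUprop⟩ := (hcont p.1 h1 x hx).1 V Metric.isOpen_thickening
      (Metric.self_subset_thickening (by positivity) _)
    have htend : Filter.Tendsto (fun n => ((pn n).1, x)) atTop (𝓝[K₂ ×ˢ K₁] (p.1, x)) := by
      rw [tendsto_nhdsWithin_iff]
      exact ⟨hlim1.prodMk_nhds tendsto_const_nhds,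
        Filter.Eventually.of_forall fun n => ⟨(hpn n).1, hx⟩⟩
    have hev : ∀ᶠ n in atTop, ((pn n).1, x) ∈ U := htend hU
    have hmemV : ∀ᶠ n in atTop, (pn n).2 ∈ V := by
      filter_upwards [hev] with n hn
      exact hUprop _ hn (hpn n).2
    have hclos : p.2 ∈ closure V := mem_closure_of_tendsto hlim2 hmemV
    obtain ⟨v, hvV, hvd⟩ := Metric.mem_closure_iff.mp hclos (ε / 4) (by positivity)
    obtain ⟨z, hzS, hvz⟩ := Metric.mem_thickening_iff.mp hvV
    have := hsep z hzS
    have := dist_triangle p.2 v z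
    linarith
  have hGcomp : ∀ x ∈ K₁, IsCompact (G x) := fun x hx =>
    (hK₂comp.prod hK₂comp).of_isClosed_subset (hGclosed x hx) (hGsub x hx)
  -- nonempty fixed point sets
  have hGval : ∀ x ∈ K₁, ∀ y ∈ K₂, ∃ z ∈ K₂, (y, z) ∈ G x := by
    intro x hx y hy
    obtain ⟨z, hz⟩ := (hval y hy x hx).1
    exact ⟨z, hTK y hy x hx hz, ⟨hy, hz⟩⟩
  have hRne : ∀ x ∈ K₁, (R x).Nonempty := by
    intro x hx
    obtain ⟨y, hyK, hyG⟩ := fix_aux K₂ hK₂ne hK₂comp hK₂conv (G x) (hGconv x hx)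
      (hGclosed x hx) (hGval x hx)
    exact ⟨y, hyK, hyG.2⟩
  have hRsub : ∀ x, R x ⊆ K₂ := fun x y hy => hy.1
  have hRclosed : ∀ x ∈ K₁, IsClosed (R x) := by
    intro x hx
    have : R x = (fun y : EuclideanSpace ℝ (Fin N) => (y, y)) ⁻¹' (G x) := by
      ext y; exact Iff.rfl
    rw [this]
    exact (hGclosed x hx).preimage (continuous_id.prodMk continuous_id)
  have hRcomp : ∀ x ∈ K₁, IsCompact (R x) :=
    fun x hx => hK₂comp.of_isClosed_subset (hRclosed x hx) (hRsub x)
  have hRconv : ∀ x ∈ K₁, Convex ℝ (R x) := by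
    intro x hx
    have : R x = (LinearMap.prod (LinearMap.id) (LinearMap.id) :
        EuclideanSpace ℝ (Fin N) →ₗ[ℝ] _) ⁻¹' (G x) := by
      ext y; exact Iff.rfl
    rw [this]
    exact (hGconv x hx).linear_preimage _
  -- uniform upper semicontinuity of the graphs
  have L1 : ∀ x₀ ∈ K₁, ∀ δ > 0, ∃ η > 0, ∀ x ∈ K₁, dist x x₀ < η →
      G x ⊆ Metric.thickening δ (G x₀) := by
    intro x₀ hx₀ δ hδ
    have key : ∀ y ∈ K₂, ∃ ρ > 0, ρ ≤ δ / 3 ∧ ∀ y' ∈ K₂, ∀ x ∈ K₁,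
        dist y' y < ρ → dist x x₀ < ρ → T y' x ⊆ Metric.thickening (δ / 3) (T y x₀) := by
      intro y hy
      obtain ⟨U, hU, hUprop⟩ := (hcont y hy x₀ hx₀).1 (Metric.thickening (δ / 3) (T y x₀))
        Metric.isOpen_thickening (Metric.self_subset_thickening (by positivity) _)
      obtain ⟨ρ₀, hρ₀, hball⟩ := Metric.mem_nhdsWithin_iff.mp hU
      refine ⟨min ρ₀ (δ / 3), lt_min hρ₀ (by positivity), min_le_right _ _, ?_⟩
      intro y' hy' x hx hdy hdx
      have hmem : ((y', x)) ∈ Metric.ball (y, x₀) ρ₀ ∩ (K₂ ×ˢ K₁) := by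
        refine ⟨?_, hy', hx⟩
        rw [Metric.mem_ball, Prod.dist_eq]
        exact max_lt (lt_of_lt_of_le hdy (min_le_left _ _))
          (lt_of_lt_of_le hdx (min_le_left _ _))
      exact hUprop _ (hball hmem)
    choose! ρ hρpos hρle hρ using key
    obtain ⟨t, htK₂, hcover⟩ := hK₂comp.elim_nhds_subcover
      (fun y => Metric.ball y (ρ y)) (fun y hy => Metric.ball_mem_nhds y (hρpos y hy))
    have htne : t.Nonempty := by
      obtain ⟨y, hy⟩ := hK₂ne
      obtain ⟨i, hi, -⟩ := Set.mem_iUnion₂.mp (hcover hy)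
      exact ⟨i, hi⟩
    refine ⟨t.inf' htne ρ, ?_, ?_⟩
    · exact (Finset.lt_inf'_iff htne).mpr fun i hi => hρpos i (htK₂ i hi)
    · intro x hx hdx p hp
      obtain ⟨i, hi, hpi⟩ := Set.mem_iUnion₂.mp (hcover hp.1)
      have hiK := htK₂ i hi
      have hdx' : dist x x₀ < ρ i := lt_of_lt_of_le hdx (Finset.inf'_le _ hi)
      have hsub := hρ i hiK p.1 hp.1 x hx (Metric.mem_ball.mp hpi) hdx'
      obtain ⟨z, hzT, hdz⟩ := Metric.mem_thickening_iff.mp (hsub hp.2)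
      rw [Metric.mem_thickening_iff]
      refine ⟨(i, z), ⟨hiK, hzT⟩, ?_⟩
      rw [Prod.dist_eq]
      have h1 : dist p.1 i < δ / 3 := lt_of_lt_of_le (Metric.mem_ball.mp hpi) (hρle i hiK)
      exact max_lt (by linarith) (by linarith)

  -- fiberwise lower semicontinuity of the graphs
  have L2 : ∀ x₀ ∈ K₁, ∀ ε > 0, ∃ η > 0, ∀ x ∈ K₁, dist x x₀ < η →
      ∀ p ∈ G x₀, ∃ z ∈ T p.1 x, dist z p.2 < ε := by
    intro x₀ hx₀ ε hε
    have key : ∀ p ∈ G x₀, ∃ ρ > 0, ρ ≤ ε / 2 ∧ ∀ y' ∈ K₂, ∀ x ∈ K₁,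
        dist y' p.1 < ρ → dist x x₀ < ρ → ∃ z ∈ T y' x, dist z p.2 < ε / 2 := by
      intro p hp
      obtain ⟨U, hU, hUprop⟩ := (hcont p.1 hp.1 x₀ hx₀).2 p.2 hp.2
        (Metric.ball p.2 (ε / 2)) Metric.isOpen_ball (Metric.mem_ball_self (by positivity))
      obtain ⟨ρ₀, hρ₀, hball⟩ := Metric.mem_nhdsWithin_iff.mp hU
      refine ⟨min ρ₀ (ε / 2), lt_min hρ₀ (by positivity), min_le_right _ _, ?_⟩
      intro y' hy' x hx hdy hdx
      have hmem : ((y', x)) ∈ Metric.ball (p.1, x₀) ρ₀ ∩ (K₂ ×ˢ K₁) := by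
        refine ⟨?_, hy', hx⟩
        rw [Metric.mem_ball, Prod.dist_eq]
        exact max_lt (lt_of_lt_of_le hdy (min_le_left _ _))
          (lt_of_lt_of_le hdx (min_le_left _ _))
      obtain ⟨z, hz1, hz2⟩ := hUprop _ (hball hmem)
      exact ⟨z, hz1, Metric.mem_ball.mp hz2⟩
    choose! ρ hρpos hρle hρ using key
    obtain ⟨t, htG, hcover⟩ := (hGcomp x₀ hx₀).elim_nhds_subcover
      (fun p => Metric.ball p (ρ p)) (fun p hp => Metric.ball_mem_nhds p (hρpos p hp))
    rcases t.eq_empty_or_nonempty with hte | htne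
    · refine ⟨1, one_pos, fun x hx hdx p hp => absurd (hcover hp) ?_⟩
      simp [hte]
    refine ⟨t.inf' htne ρ, (Finset.lt_inf'_iff htne).mpr fun i hi => hρpos i (htG i hi), ?_⟩
    intro x hx hdx p hp
    obtain ⟨q, hq, hpq⟩ := Set.mem_iUnion₂.mp (hcover hp)
    have hqG := htG q hq
    have hdx' : dist x x₀ < ρ q := lt_of_lt_of_le hdx (Finset.inf'_le _ hq)
    have hd1 : dist p.1 q.1 < ρ q :=
      lt_of_le_of_lt (le_max_left _ _) (by rw [← Prod.dist_eq]; exact Metric.mem_ball.mp hpq)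
    have hd2 : dist p.2 q.2 ≤ ε / 2 := le_trans
      (le_trans (le_max_right (dist p.1 q.1) _) (le_of_lt (by rw [← Prod.dist_eq]; exact Metric.mem_ball.mp hpq)))
      (hρle q hqG)
    obtain ⟨z, hzT, hdz⟩ := hρ q hqG p.1 hp.1 x hx hd1 hdx'
    refine ⟨z, hzT, ?_⟩
    have htri : dist z p.2 ≤ dist z q.2 + dist q.2 p.2 := dist_triangle _ _ _
    have hd2' : dist q.2 p.2 ≤ ε / 2 := by rw [dist_comm]; exact hd2
    linarith

  -- upper semicontinuity of the fixed-point map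
  have Rusc : ∀ x₀ ∈ K₁, ∀ ε > 0, ∃ η > 0, ∀ x ∈ K₁, dist x x₀ < η →
      ∀ y ∈ R x, ∃ y' ∈ R x₀, dist y y' < ε := by
    intro x₀ hx₀ ε hε
    have hDiag : IsClosed {p : EuclideanSpace ℝ (Fin N) × EuclideanSpace ℝ (Fin N) | p.1 = p.2} :=
      isClosed_eq continuous_fst continuous_snd
    obtain ⟨y₀, hy₀⟩ := hRne x₀ hx₀
    have hABne : ((G x₀) ∩ {p : EuclideanSpace ℝ (Fin N) × EuclideanSpace ℝ (Fin N) | p.1 = p.2}).Nonempty :=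
      ⟨(y₀, y₀), ⟨hy₀.1, hy₀.2⟩, rfl⟩
    obtain ⟨δ, hδ, hnear⟩ := near_aux (G x₀) _ (hGcomp x₀ hx₀) hDiag hABne ε hε
    obtain ⟨η, hη, hL1⟩ := L1 x₀ hx₀ δ hδ
    refine ⟨η, hη, fun x hx hdx y hy => ?_⟩
    have hyG : ((y, y)) ∈ G x := ⟨hy.1, hy.2⟩
    obtain ⟨g, hgG, hgd⟩ := Metric.mem_thickening_iff.mp (hL1 x hx hdx hyG)
    have hinf : Metric.infDist ((y, y)) (G x₀) < δ :=
      lt_of_le_of_lt (Metric.infDist_le_dist_of_mem hgG) hgd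
    obtain ⟨a, ⟨haG, haD⟩, had⟩ := hnear ((y, y)) rfl hinf
    refine ⟨a.1, ⟨haG.1, ?_⟩, ?_⟩
    · have := haG.2
      rwa [← haD] at this
    · calc dist y a.1 ≤ dist ((y, y)) a := by
            rw [Prod.dist_eq]; exact le_max_left _ _
        _ < ε := had

  -- lower semicontinuity of the fixed-point map
  have Rlsc : ∀ x₀ ∈ K₁, ∀ y₀ ∈ R x₀, ∀ ε > 0, ∃ η > 0, ∀ x ∈ K₁, dist x x₀ < η →
      ∃ y ∈ R x, dist y y₀ < ε := by
    intro x₀ hx₀ y₀ hy₀ ε hε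
    by_cases hex : ∃ y₁ ∈ R x₀, y₁ ≠ y₀
    · obtain ⟨y₁, hy₁, hne⟩ := hex
      have hpG : ((y₁, y₁)) ∈ GraphOn K₂ (fun y => T y x₀) := ⟨hy₁.1, hy₁.2⟩
      have hqG : ((y₀, y₀)) ∈ GraphOn K₂ (fun y => T y x₀) := ⟨hy₀.1, hy₀.2⟩
      obtain ⟨l, hl, hw⟩ := (hrot x₀ hx₀).2 (y₁, y₁) hpG (y₀, y₀) hqG
        (by simpa using hne) (by simpa using hne)
      set c : EuclideanSpace ℝ (Fin N) := l • y₁ + (1 - l) • y₀ with hcdef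
      have hwc : l • ((y₁, y₁) : EuclideanSpace ℝ (Fin N) × EuclideanSpace ℝ (Fin N))
          + (1 - l) • ((y₀, y₀) : EuclideanSpace ℝ (Fin N) × EuclideanSpace ℝ (Fin N))
          = (c, c) := rfl
      have hwG : ((c, c)) ∈ G x₀ := by
        rw [← hwc]
        exact hGconv x₀ hx₀ hpG hqG hl.1.le (by linarith [hl.2]) (by ring)
      have hwint : ((c, c)) ∈ interior (G x₀) := by
        rw [hwc] at hw
        by_contra hcontra
        exact hw ⟨subset_closure hwG, hcontra⟩
      have hdist0 : (0:ℝ) ≤ dist c y₀ := dist_nonneg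
      set τ : ℝ := min 1 (ε / (2 * (dist c y₀ + 1))) with hτdef
      have hτ0 : 0 < τ := lt_min one_pos (by positivity)
      have hτ1 : τ ≤ 1 := min_le_left _ _
      set c' : EuclideanSpace ℝ (Fin N) := τ • c + (1 - τ) • y₀ with hc'def
      have hqc : ((y₀, y₀)) ∈ closure (G x₀) := subset_closure hqG
      have hc'int : ((c', c')) ∈ interior (G x₀) := by
        have h := (hGconv x₀ hx₀).combo_interior_closure_mem_interior (a := τ) (b := 1 - τ)
          hwint hqc hτ0 (by linarith) (by ring)
        exact h
      have hc'd : dist c' y₀ < ε / 2 := by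
        have h1 : c' - y₀ = τ • (c - y₀) := by
          rw [hc'def, sub_smul, one_smul, smul_sub]; abel
        have h2 : dist c' y₀ = τ * dist c y₀ := by
          rw [dist_eq_norm, h1, norm_smul, Real.norm_eq_abs, abs_of_pos hτ0, dist_eq_norm]
        rw [h2]
        have h3 : τ ≤ ε / (2 * (dist c y₀ + 1)) := min_le_right _ _
        have h4 : τ * dist c y₀ ≤ ε / (2 * (dist c y₀ + 1)) * dist c y₀ :=
          mul_le_mul_of_nonneg_right h3 hdist0
        have h5 : ε / (2 * (dist c y₀ + 1)) * dist c y₀ < ε / 2 := by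
          rw [div_mul_eq_mul_div, div_lt_iff₀ (by positivity)]
          nlinarith
        linarith
      obtain ⟨ρ₀, hρ₀, hball⟩ := Metric.mem_nhds_iff.mp (mem_interior_iff_mem_nhds.mp hc'int)
      set ρ : ℝ := min ρ₀ ε with hρdef
      have hρpos : 0 < ρ := lt_min hρ₀ hε
      have hρle : ρ ≤ ρ₀ := min_le_left _ _
      have hc'K : c' ∈ K₂ := (interior_subset hc'int).1
      set K' : Set (EuclideanSpace ℝ (Fin N)) := K₂ ∩ Metric.closedBall c' (ρ/2) with hK'def
      have hK'ne : K'.Nonempty := ⟨c', hc'K, Metric.mem_closedBall_self (by positivity)⟩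
      have hK'comp : IsCompact K' := hK₂comp.inter_right Metric.isClosed_closedBall
      have hK'conv : Convex ℝ K' := hK₂conv.inter (convex_closedBall _ _)
      obtain ⟨η, hη, hL2⟩ := L2 x₀ hx₀ (ρ/2) (by positivity)
      refine ⟨η, hη, fun x hx hdx => ?_⟩
      have hval' : ∀ y ∈ K', ∃ z ∈ K', ((y, z)) ∈ G x := by
        intro y hy
        have hyc' : ((y, c')) ∈ G x₀ := by
          apply hball
          rw [Metric.mem_ball, Prod.dist_eq]
          have hd1 : dist y c' ≤ ρ/2 := Metric.mem_closedBall.mp hy.2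
          have hd2 : dist c' c' = 0 := dist_self c'
          rw [hd2]
          apply max_lt (by linarith) (by linarith)
        obtain ⟨z, hzT, hzd⟩ := hL2 x hx hdx (y, c') hyc'
        exact ⟨z, ⟨hTK y hy.1 x hx hzT, Metric.mem_closedBall.mpr hzd.le⟩, ⟨hy.1, hzT⟩⟩
      obtain ⟨ys, hysK', hysG⟩ := fix_aux K' hK'ne hK'comp hK'conv (G x)
        (hGconv x hx) (hGclosed x hx) hval'
      refine ⟨ys, ⟨hysG.1, hysG.2⟩, ?_⟩
      have h6 : dist ys c' ≤ ρ/2 := Metric.mem_closedBall.mp hysK'.2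
      have h7 : ρ ≤ ε := min_le_right _ _
      calc dist ys y₀ ≤ dist ys c' + dist c' y₀ := dist_triangle _ _ _
        _ < ρ/2 + ε/2 := by linarith
        _ ≤ ε := by linarith
    · push_neg at hex
      obtain ⟨η, hη, husc⟩ := Rusc x₀ hx₀ ε hε
      refine ⟨η, hη, fun x hx hdx => ?_⟩
      obtain ⟨y, hy⟩ := hRne x hx
      obtain ⟨y', hy', hd⟩ := husc x hx hdx y hy
      rw [hex y' hy'] at hd
      exact ⟨y, hy, hd⟩

  -- uniform version of lower semicontinuity
  have Rlsc_unif : ∀ x₀ ∈ K₁, ∀ ε > 0, ∃ η > 0, ∀ x ∈ K₁, dist x x₀ < η →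
      ∀ y₀ ∈ R x₀, ∃ y ∈ R x, dist y y₀ < ε := by
    intro x₀ hx₀ ε hε
    have key : ∀ y₀ ∈ R x₀, ∃ η > 0, ∀ x ∈ K₁, dist x x₀ < η →
        ∃ y ∈ R x, dist y y₀ < ε / 2 :=
      fun y₀ hy₀ => Rlsc x₀ hx₀ y₀ hy₀ (ε / 2) (by positivity)
    choose! η hηpos hη using key
    obtain ⟨t, htR, hcover⟩ := (hRcomp x₀ hx₀).elim_nhds_subcover
      (fun y => Metric.ball y (ε / 2)) (fun y _ => Metric.ball_mem_nhds y (by positivity))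
    have htne : t.Nonempty := by
      obtain ⟨y, hy⟩ := hRne x₀ hx₀
      obtain ⟨i, hi, -⟩ := Set.mem_iUnion₂.mp (hcover hy)
      exact ⟨i, hi⟩
    refine ⟨t.inf' htne η, (Finset.lt_inf'_iff htne).mpr fun i hi => hηpos i (htR i hi), ?_⟩
    intro x hx hdx y₀ hy₀
    obtain ⟨i, hi, hyi⟩ := Set.mem_iUnion₂.mp (hcover hy₀)
    obtain ⟨y, hyR, hyd⟩ := hη i (htR i hi) x hx (lt_of_lt_of_le hdx (Finset.inf'_le _ hi))
    refine ⟨y, hyR, ?_⟩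
    have h1 : dist y₀ i < ε / 2 := Metric.mem_ball.mp hyi
    have h2 : dist y y₀ ≤ dist y i + dist i y₀ := dist_triangle _ _ _
    rw [dist_comm] at h1
    linarith

  -- the minimal-norm selection
  have hsel : ∀ x, ∃ v, x ∈ K₁ → v ∈ R x ∧ (∀ w ∈ R x, ‖v‖ ≤ ‖w‖) ∧
      ∀ w ∈ R x, (inner ℝ ((0 : EuclideanSpace ℝ (Fin N)) - v) (w - v) : ℝ) ≤ 0 := by
    intro x
    by_cases hx : x ∈ K₁
    · obtain ⟨v, hv1, hv2, hv3⟩ := proj_aux (R x) (hRne x hx) (hRcomp x hx) (hRconv x hx)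
      exact ⟨v, fun _ => ⟨hv1, hv2, hv3⟩⟩
    · exact ⟨0, fun h => absurd h hx⟩
  choose r hr using hsel
  -- bound on K₂
  obtain ⟨M₀, hM₀⟩ := hK₂comp.isBounded.exists_norm_le
  set M : ℝ := max M₀ 0 with hM
  have hMnn : 0 ≤ M := le_max_right _ _
  have hMb : ∀ y ∈ K₂, ‖y‖ ≤ M := fun y hy => le_trans (hM₀ y hy) (le_max_left _ _)
  -- continuity of the selection
  have hrcont : ContinuousOn r K₁ := by
    rw [Metric.continuousOn_iff]
    intro x₀ hx₀ ε hε
    have hM1 : (0:ℝ) < M + 1 := by linarith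
    set h : ℝ := min 1 (min (ε/4) (ε^2/(16*(M+1)))) with hhdef
    have hhpos : 0 < h := lt_min one_pos (lt_min (by positivity) (by positivity))
    have hh1 : h ≤ 1 := min_le_left _ _
    have hh2 : h ≤ ε/4 := le_trans (min_le_right _ _) (min_le_left _ _)
    have hh3 : h ≤ ε^2/(16*(M+1)) := le_trans (min_le_right _ _) (min_le_right _ _)
    obtain ⟨η₁, hη₁, hu⟩ := Rusc x₀ hx₀ h hhpos
    obtain ⟨η₂, hη₂, hlo⟩ := Rlsc_unif x₀ hx₀ h hhpos
    refine ⟨min η₁ η₂, lt_min hη₁ hη₂, fun x hx hdx => ?_⟩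
    have hdx1 : dist x x₀ < η₁ := lt_of_lt_of_le hdx (min_le_left _ _)
    have hdx2 : dist x x₀ < η₂ := lt_of_lt_of_le hdx (min_le_right _ _)
    obtain ⟨hcR, hcmin, hcobt⟩ := hr x₀ hx₀
    obtain ⟨hdR, hdmin, hdobt⟩ := hr x hx
    obtain ⟨d', hd'R, hd'd⟩ := hu x hx hdx1 (r x) hdR
    obtain ⟨c'', hc''R, hc''d⟩ := hlo x hx hdx2 (r x₀) hcR
    have h1 : ‖r x‖ ≤ ‖r x₀‖ + h := by
      have ha := hdmin c'' hc''R
      have hb : ‖c''‖ - ‖r x₀‖ ≤ ‖c'' - r x₀‖ := norm_sub_norm_le _ _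
      have hcd : ‖c'' - r x₀‖ < h := by rw [← dist_eq_norm]; exact hc''d
      linarith
    have h3 : ‖d'‖ ≤ ‖r x‖ + h := by
      have hb : ‖d'‖ - ‖r x‖ ≤ ‖d' - r x‖ := norm_sub_norm_le _ _
      have hcd : ‖d' - r x‖ < h := by rw [← dist_eq_norm, dist_comm]; exact hd'd
      linarith
    have hobt := hcobt d' hd'R
    have hip : 0 ≤ (inner ℝ (r x₀) (d' - r x₀) : ℝ) := by
      have hrw : (inner ℝ ((0 : EuclideanSpace ℝ (Fin N)) - r x₀) (d' - r x₀) : ℝ)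
          = - (inner ℝ (r x₀) (d' - r x₀) : ℝ) := by
        rw [zero_sub, inner_neg_left]
      rw [hrw] at hobt
      linarith
    have hexp : ‖d'‖^2 = ‖r x₀‖^2 + 2*(inner ℝ (r x₀) (d' - r x₀) : ℝ) + ‖d' - r x₀‖^2 := by
      have hd'eq : r x₀ + (d' - r x₀) = d' := by abel
      calc ‖d'‖^2 = ‖r x₀ + (d' - r x₀)‖^2 := by rw [hd'eq]
        _ = _ := norm_add_sq_real _ _
    have hcM : ‖r x₀‖ ≤ M := hMb _ (hRsub x₀ hcR)
    have hkey : ‖d' - r x₀‖^2 ≤ 4*h*(M+1) := by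
      have hub : ‖d'‖ ≤ ‖r x₀‖ + 2*h := by linarith
      have hsq2 : ‖d'‖^2 ≤ (‖r x₀‖ + 2*h)^2 := by nlinarith [norm_nonneg d']
      have hhc : h * ‖r x₀‖ ≤ h * M := mul_le_mul_of_nonneg_left hcM hhpos.le
      have hhh : h * h ≤ h * 1 := mul_le_mul_of_nonneg_left hh1 hhpos.le
      nlinarith [hexp, hip]
    have h4hM : 4*h*(M+1) ≤ ε^2/4 := by
      have hmul := mul_le_mul_of_nonneg_right hh3 (by positivity : (0:ℝ) ≤ 4*(M+1))
      have heq : ε^2/(16*(M+1)) * (4*(M+1)) = ε^2/4 := by field_simp; ring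
      calc 4*h*(M+1) = h * (4*(M+1)) := by ring
        _ ≤ ε^2/(16*(M+1)) * (4*(M+1)) := hmul
        _ = ε^2/4 := heq
    have hd'c : dist d' (r x₀) ≤ ε/2 := by
      have hsq : dist d' (r x₀)^2 ≤ (ε/2)^2 := by
        rw [dist_eq_norm]; nlinarith
      nlinarith [dist_nonneg (x := d') (y := r x₀), hε]
    calc dist (r x) (r x₀) ≤ dist (r x) d' + dist d' (r x₀) := dist_triangle _ _ _
      _ < h + ε/2 := by linarith
      _ ≤ ε := by linarith

  -- minimization
  have hgcont : ContinuousOn (fun x => f x (r x)) K₁ := by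
    have := hf.comp (continuousOn_id.prodMk hrcont)
      (fun x hx => Set.mk_mem_prod hx (hRsub x (hr x hx).1))
    exact this
  obtain ⟨xs, hxs, hmin⟩ := hK₁comp.exists_isMinOn hK₁ne hgcont
  exact ⟨r, hrcont, fun x hx => ⟨(hr x hx).1.1, (hr x hx).1.2⟩,
    xs, hxs, fun x hx => isMinOn_iff.mp hmin x hx⟩
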